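/- Let (I_n) be a partition of ℕ into consecutive finite intervals, let G_n ≤ S(I_n), and let c_n : F({0,1}^n) → G_n be group homomorphisms such that c_n is injective on the set W_n of reduced words of length at most n. Define ρ : F({0,1}^ℕ) → S_∞ on each generator x ∈ {0,1}^ℕ by ρ(x) ↾ I_n = c_n(x ↾ n) (restriction of the infinite binary sequence to its first n bits), where each c_n ∘ r_n is the composition with the restriction homomorphism r_n : F({0,1}^ℕ) → F({0,1}^n). Then ρ is an injective group homomorphism. -/

import Mathlib

theorem stmt4 (m : ℕ → ℕ) (hmono : StrictMono m) (hm0 : m 0 = 0)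
    (c : ∀ n : ℕ, FreeGroup (Fin n → Bool) →* Equiv.Perm (Set.Ico (m n) (m (n + 1))))
    (hinj : ∀ n, Set.InjOn ⇑(c n) {w | FreeGroup.norm w ≤ n})
    (ρ : FreeGroup (ℕ → Bool) →* Equiv.Perm ℕ)
    (hρ : ∀ (w : FreeGroup (ℕ → Bool)) (n k : ℕ) (hk : k ∈ Set.Ico (m n) (m (n + 1))),
      ρ w k = ((c n) ((FreeGroup.map fun (x : ℕ → Bool) (i : Fin n) => x i) w) ⟨k, hk⟩ : ℕ)) :
    Function.Injective ⇑ρ := by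
  classical
  rw [injective_iff_map_eq_one]
  intro w hw
  by_contra hne
  -- the letters appearing in w
  set S : Set (ℕ → Bool) := {x | ∃ b, (x, b) ∈ w.toWord} with hS
  -- choose an index separating each pair of distinct letters
  have hdiff : ∀ x y : ℕ → Bool, x ≠ y → ∃ i, x i ≠ y i := by
    intro x y hxy
    by_contra h
    push_neg at h
    exact hxy (funext h)
  set g : (ℕ → Bool) → (ℕ → Bool) → ℕ := fun x y =>
    if h : x ≠ y then Nat.find (hdiff x y h) else 0 with hg
  set L := w.toWord with hL
  set T : Finset ((ℕ → Bool) × (ℕ → Bool)) :=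
    ((L.map Prod.fst).toFinset ×ˢ (L.map Prod.fst).toFinset) with hT
  set n : ℕ := max w.norm (T.sup fun p => g p.1 p.2 + 1) with hn
  have hnorm : w.norm ≤ n := le_max_left _ _
  have hsep : ∀ x ∈ S, ∀ y ∈ S, x ≠ y → ∃ i : Fin n, x i ≠ y i := by
    intro x hx y hy hxy
    obtain ⟨bx, hbx⟩ := hx
    obtain ⟨by', hby⟩ := hy
    have hxT : (x, y) ∈ T := by
      rw [hT, Finset.mem_product]
      constructor <;> rw [List.mem_toFinset, List.mem_map]
      · exact ⟨(x, bx), hbx, rfl⟩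
      · exact ⟨(y, by'), hby, rfl⟩
    have hlt : g x y < n := by
      have h1 : g x y + 1 ≤ T.sup (fun p => g p.1 p.2 + 1) := Finset.le_sup (f := fun p => g p.1 p.2 + 1) hxT
      have h2 : (T.sup fun p => g p.1 p.2 + 1) ≤ n := le_max_right _ _
      omega
    refine ⟨⟨g x y, hlt⟩, ?_⟩
    simpa [hg, hxy] using Nat.find_spec (hdiff x y hxy)
  set rn : (ℕ → Bool) → (Fin n → Bool) := fun x i => x i with hrn
  have hinjS : Set.InjOn rn S := by
    intro x hx y hy hxy
    by_contra hne'
    obtain ⟨i, hi⟩ := hsep x hx y hy hne'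
    exact hi (congrFun hxy i)
  -- a left inverse on S
  set s : (Fin n → Bool) → (ℕ → Bool) := Function.invFunOn rn S with hs
  have hsec : ∀ x ∈ S, s (rn x) = x := fun x hx => hinjS.leftInvOn_invFunOn hx
  -- map rn w is nontrivial
  have hmapmk : ∀ (f : (ℕ → Bool) → (Fin n → Bool)),
      FreeGroup.map f w = FreeGroup.mk (L.map fun p => (f p.1, p.2)) := by
    intro f
    conv_lhs => rw [← FreeGroup.mk_toWord (x := w), FreeGroup.map.mk]
  have hback : FreeGroup.map s (FreeGroup.map rn w) = w := by
    rw [hmapmk rn, FreeGroup.map.mk, List.map_map]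
    conv_rhs => rw [← FreeGroup.mk_toWord (x := w)]
    congr 1
    rw [← hL]
    refine List.map_congr_left ?_ |>.trans (List.map_id L)
    intro p hp
    have hpS : p.1 ∈ S := ⟨p.2, by simpa using hp⟩
    simp [Function.comp, hsec p.1 hpS]
  have hne1 : FreeGroup.map rn w ≠ 1 := by
    intro h
    rw [← hback, h, map_one] at hne
    exact hne rfl
  -- norm bound
  have hnle : (FreeGroup.map rn w).norm ≤ n := by
    rw [hmapmk rn]
    calc (FreeGroup.mk (L.map fun p => (rn p.1, p.2))).norm
        ≤ (L.map fun p => (rn p.1, p.2)).length := FreeGroup.norm_mk_le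
      _ = L.length := List.length_map _
      _ = w.norm := rfl
      _ ≤ n := hnorm
  -- hence c n of it is a nontrivial permutation
  have hcne : c n (FreeGroup.map rn w) ≠ 1 := by
    intro h
    apply hne1
    refine hinj n ?_ ?_ ?_
    · exact hnle
    · simp [FreeGroup.norm_one]
    · rw [h, map_one]
  obtain ⟨a, ha⟩ : ∃ a, c n (FreeGroup.map rn w) a ≠ a := by
    by_contra h
    push_neg at h
    exact hcne (Equiv.ext h)
  have hρa := hρ w n a.1 a.2
  rw [hw] at hρa
  simp only [Equiv.Perm.coe_one, id_eq] at hρa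
  apply ha
  apply Subtype.ext
  rw [← hρa]
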